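/- Assume Hypotheses 1, 2, 3 and 7. Then there is at most one monotone solution of the impulse-control master equation; moreover, if such a solution exists, it is a monotone map on O_d. -/

import Mathlib

open scoped RealInnerProductSpace
noncomputable section

/-- `ℝ^d` with the Euclidean inner product. -/
abbrev Euc (d : ℕ) := EuclideanSpace ℝ (Fin d)

/-- The positive orthant `O_d = (ℝ≥0)^d`. -/
def Od (d : ℕ) : Set (Euc d) := {x | ∀ i, 0 ≤ x i}

/-- `B_R = {x ∈ O_d : x_1 + ... + x_d ≤ R}`. -/
def Ball1 (d : ℕ) (R : ℝ) : Set (Euc d) := {x | x ∈ Od d ∧ ∑ i, x i ≤ R}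

/-- `p ≤ Mq` for the jump operator with (possibly infinite) costs `k : (0, +∞]`:
`pⁱ ≤ k_{ij} + qʲ` for all `i, j` (automatic in coordinates where `k_{ij} = ∞`). -/
def leJump (d : ℕ) (k : Fin d → Fin d → EReal) (p q : Euc d) : Prop :=
  ∀ i j, (p i : EReal) ≤ k i j + (q j : EReal)

/-- Monotone solution of the master equation for the MFG of impulse control
(Definition 4.1): `U ≤ MU` on `O_d`, and the monotone-solution inequality holds for all test
vectors `V ≤ MV`, with threshold `R₁ ≥ R₀` where `R₀` is the constant of Hypothesis 2. -/
def IsMonotoneSolIC (d : ℕ) (k : Fin d → Fin d → EReal) (F G : Euc d → Euc d → Euc d)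
    (r lam : ℝ) (T : Euc d →L[ℝ] Euc d) (R₀ : ℝ) (U : Euc d → Euc d) : Prop :=
  ContinuousOn U (Od d) ∧
  (∀ x ∈ Od d, leJump d k (U x) (U x)) ∧
  ∃ R₁ ≥ R₀, ∀ R ≥ R₁, ∀ V : Euc d, leJump d k V V → ∀ y ∈ Od d, ∀ x₀ ∈ Ball1 d R,
    (∀ x ∈ Ball1 d R, x ≠ x₀ → ⟪U x₀ - V, x₀ - y⟫ < ⟪U x - V, x - y⟫) →
    ⟪G x₀ (U x₀), x₀ - y⟫ + ⟪F x₀ (U x₀), U x₀ - V⟫ ≤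
      r * ⟪U x₀, x₀ - y⟫
        + lam * ⟪U x₀ - ContinuousLinearMap.adjoint T (U (T x₀)), x₀ - y⟫

/-! ### Auxiliary results -/

section Stegall
variable {E : Type*} [NormedAddCommGroup E] [InnerProductSpace ℝ E] [FiniteDimensional ℝ E]

/-- Stegall-type variational principle in finite dimension. -/
lemma stegall_perturb {K : Set E} (hK : IsCompact K) (hne : K.Nonempty)
    {f : E → ℝ} (hf : ContinuousOn f K) (v₀ : E) {ε : ℝ} (hε : 0 < ε) :
    ∃ v : E, ‖v - v₀‖ < ε ∧ ∃ x₀ ∈ K, ∀ x ∈ K, x ≠ x₀ →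
      f x₀ + ⟪v, x₀⟫ < f x + ⟪v, x⟫ := by
  obtain ⟨C, hC⟩ := hK.isBounded.exists_norm_le
  have hC0 : 0 ≤ C := le_trans (norm_nonneg _) (hC _ hne.choose_spec)
  set g : E → ℝ := fun v => sInf ((fun x => f x + ⟪v, x⟫) '' K) with hg
  have hcont : ∀ v : E, ContinuousOn (fun x => f x + ⟪v, x⟫) K :=
    fun v => hf.add ((continuous_const.inner continuous_id).continuousOn)
  have himg : ∀ v : E, IsCompact ((fun x => f x + ⟪v, x⟫) '' K) :=
    fun v => hK.image_of_continuousOn (hcont v)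
  have hattain : ∀ v : E, ∃ x ∈ K, f x + ⟪v, x⟫ = g v := by
    intro v
    obtain ⟨x, hx, hfx⟩ := (himg v).sInf_mem (hne.image _)
    exact ⟨x, hx, hfx⟩
  have hle : ∀ v : E, ∀ x ∈ K, g v ≤ f x + ⟪v, x⟫ := by
    intro v x hx
    exact csInf_le (himg v).bddBelow ⟨x, hx, rfl⟩
  have hlip : LipschitzWith (Real.toNNReal C) g := by
    apply LipschitzWith.of_dist_le_mul
    intro v w
    have key : ∀ v w : E, g v - g w ≤ C * dist v w := by
      intro v w
      obtain ⟨x, hx, hfx⟩ := hattain w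
      have h1 : g v ≤ f x + ⟪v, x⟫ := hle v x hx
      have h2 : f x + ⟪v, x⟫ = (f x + ⟪w, x⟫) + ⟪v - w, x⟫ := by
        rw [inner_sub_left]; ring
      have h3 : ⟪v - w, x⟫ ≤ C * dist v w := by
        calc ⟪v - w, x⟫ ≤ ‖v - w‖ * ‖x‖ := real_inner_le_norm _ _
        _ ≤ ‖v - w‖ * C := by
            have := hC x hx
            nlinarith [norm_nonneg (v - w)]
        _ = C * dist v w := by rw [dist_eq_norm]; ring
      linarith [h1, h2 ▸ h1, hfx]
    rw [Real.dist_eq, Real.coe_toNNReal _ hC0, abs_sub_le_iff]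
    refine ⟨key v w, ?_⟩
    have h2 := key w v
    rwa [dist_comm w v] at h2
  borelize E
  set μ : MeasureTheory.Measure E := (Module.finBasis ℝ E).addHaar with hμ
  have hae : ∀ᵐ v ∂μ, DifferentiableAt ℝ g v := hlip.ae_differentiableAt
  have hball : ∃ v ∈ Metric.ball v₀ ε, DifferentiableAt ℝ g v := by
    by_contra hcon
    push_neg at hcon
    have hsub : Metric.ball v₀ ε ⊆ {v | ¬ DifferentiableAt ℝ g v} := fun v hv => hcon v hv
    have h0 : μ (Metric.ball v₀ ε) = 0 :=
      MeasureTheory.measure_mono_null hsub (MeasureTheory.ae_iff.mp hae)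
    exact (Metric.measure_ball_pos μ v₀ hε).ne' h0
  obtain ⟨v, hvball, hvdiff⟩ := hball
  refine ⟨v, by simpa [dist_eq_norm] using hvball, ?_⟩
  obtain ⟨x₀, hx₀K, hx₀⟩ := hattain v
  have huniq : ∀ x ∈ K, f x + ⟪v, x⟫ = g v → ∀ u : E, ⟪u, x⟫ = fderiv ℝ g v u := by
    intro x hx hxmin u
    set φ : ℝ → ℝ := fun t => g (v + t • u) - t * ⟪u, x⟫ with hφ
    have hmax : IsLocalMax φ 0 := by
      apply Filter.Eventually.of_forall
      intro t
      have : g (v + t • u) ≤ f x + ⟪v + t • u, x⟫ := hle _ x hx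
      simp only [φ, inner_add_left, real_inner_smul_left] at this ⊢
      simp only [zero_smul, add_zero, zero_mul, sub_zero]
      linarith [hxmin]
    have hd1 : HasDerivAt (fun t : ℝ => v + t • u) u 0 := by
      simpa using ((hasDerivAt_id (0:ℝ)).smul_const u).const_add v
    have hd2 : HasDerivAt (fun t : ℝ => g (v + t • u)) (fderiv ℝ g v u) 0 := by
      have hfd : HasFDerivAt g (fderiv ℝ g v) ((fun t : ℝ => v + t • u) 0) := by
        simpa using hvdiff.hasFDerivAt
      exact hfd.comp_hasDerivAt 0 hd1
    have hd3 : HasDerivAt φ (fderiv ℝ g v u - ⟪u, x⟫) 0 := by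
      have h := hd2.sub ((hasDerivAt_id (0:ℝ)).mul_const (⟪u, x⟫))
      simp only [one_mul] at h
      exact h
    have := hmax.hasDerivAt_eq_zero hd3
    linarith [this]
  refine ⟨x₀, hx₀K, ?_⟩
  intro x hx hxne
  rcases lt_or_eq_of_le (hx₀ ▸ hle v x hx) with h | h
  · linarith [hx₀]
  · exfalso
    apply hxne
    have e1 : ∀ u : E, ⟪u, x⟫ = fderiv ℝ g v u := huniq x hx (by linarith [hx₀, h])
    have e2 : ∀ u : E, ⟪u, x₀⟫ = fderiv ℝ g v u := huniq x₀ hx₀K hx₀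
    have h3 : ∀ u : E, ⟪u, x - x₀⟫ = 0 := by
      intro u; rw [inner_sub_right, e1 u, e2 u]; ring
    have h4 := h3 (x - x₀)
    rw [real_inner_self_eq_norm_sq] at h4
    have h5 : ‖x - x₀‖ = 0 := by nlinarith [norm_nonneg (x - x₀)]
    rwa [norm_eq_zero, sub_eq_zero] at h5

end Stegall

/-- From Hypothesis 7 produce a potential `h` with `h j + 1 ≤ h i` whenever
`i ≠ j` and `k i j ≠ ⊤`. -/
lemma exists_potential (d : ℕ) (k : Fin d → Fin d → EReal)
    (hyp7 : ∀ (n : ℕ) (s : ℕ → Fin d), s (n + 1) = s 0 →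
      (∀ m ≤ n, k (s m) (s (m + 1)) ≠ ⊤) → ∀ m ≤ n + 1, s m = s 0) :
    ∃ h : Fin d → ℝ, ∀ i j, i ≠ j → k i j ≠ ⊤ → h j + 1 ≤ h i := by
  classical
  set rel : Fin d → Fin d → Prop := fun i j => i ≠ j ∧ k i j ≠ ⊤ with hrel
  have hpath : ∀ i j, Relation.TransGen rel i j → ∃ n, ∃ s : ℕ → Fin d,
      s 0 = i ∧ s (n + 1) = j ∧ ∀ m ≤ n, rel (s m) (s (m + 1)) := by
    intro i j htg
    induction htg with
    | @single c hbc =>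
        exact ⟨0, fun m => if m = 0 then i else c, by simp, by simp, by
          intro m hm
          interval_cases m
          simpa using hbc⟩
    | @tail b c hab hbc ih =>
        obtain ⟨n, s, hs0, hsn, hs⟩ := ih
        refine ⟨n + 1, fun m => if m ≤ n + 1 then s m else c, by simpa using hs0, by simp, ?_⟩
        intro m hm
        rcases Nat.lt_or_ge m (n + 1) with h | h
        · have h1 : m ≤ n + 1 := le_of_lt h
          have h2 : m + 1 ≤ n + 1 := h
          simpa [h1, h2] using hs m (Nat.lt_succ_iff.mp h)
        · have hm' : m = n + 1 := le_antisymm hm h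
          subst hm'
          have h1 : n + 1 ≤ n + 1 := le_rfl
          have h2 : ¬ (n + 2 ≤ n + 1) := by omega
          simpa [h1, h2, hsn] using hbc
  have hirr : ∀ i, ¬ Relation.TransGen rel i i := by
    intro i htg
    obtain ⟨n, s, hs0, hsn, hs⟩ := hpath i i htg
    have hcyc : s (n + 1) = s 0 := by rw [hsn, hs0]
    have hfin : ∀ m ≤ n, k (s m) (s (m + 1)) ≠ ⊤ := fun m hm => (hs m hm).2
    have h1 : s 1 = s 0 := hyp7 n s hcyc hfin 1 (by omega)
    exact (hs 0 (Nat.zero_le n)).1 h1.symm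
  set reach : Fin d → Finset (Fin d) :=
    fun i => Finset.univ.filter (fun m => Relation.TransGen rel i m) with hreach
  refine ⟨fun i => ((reach i).card : ℝ), ?_⟩
  intro i j hne hfin
  have hij : rel i j := ⟨hne, hfin⟩
  have hsub : reach j ⊆ reach i := by
    intro m hm
    simp only [hreach, Finset.mem_filter, Finset.mem_univ, true_and] at hm ⊢
    exact (Relation.TransGen.single hij).trans hm
  have hjmem : j ∈ reach i := by
    simp only [hreach, Finset.mem_filter, Finset.mem_univ, true_and]
    exact Relation.TransGen.single hij
  have hjnot : j ∉ reach j := by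
    simp only [hreach, Finset.mem_filter, Finset.mem_univ, true_and]
    exact hirr j
  have hlt : (reach j).card < (reach i).card :=
    Finset.card_lt_card (Finset.ssubset_iff_of_subset hsub |>.mpr ⟨j, hjmem, hjnot⟩)
  have h2 : (reach j).card + 1 ≤ (reach i).card := hlt
  show ((reach j).card : ℝ) + 1 ≤ ((reach i).card : ℝ)
  exact_mod_cast h2

lemma abs_coord_le_norm {d : ℕ} (x : Euc d) (i : Fin d) : |x i| ≤ ‖x‖ := by
  rw [EuclideanSpace.norm_eq]
  have h1 : |x i| = Real.sqrt (‖x i‖ ^ 2) := by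
    rw [Real.sqrt_sq_eq_abs, Real.norm_eq_abs, abs_abs]
  rw [h1]
  apply Real.sqrt_le_sqrt
  exact Finset.single_le_sum (f := fun j => ‖x j‖ ^ 2) (fun j _ => sq_nonneg _)
    (Finset.mem_univ i)

lemma norm_le_of_mem_Ball1 {d : ℕ} {R : ℝ} (hR : 0 ≤ R) {x : Euc d} (hx : x ∈ Ball1 d R) :
    ‖x‖ ≤ R := by
  have hnn := hx.1
  have hsum := hx.2
  have hcoord : ∀ i, x i ≤ R := by
    intro i
    calc x i ≤ ∑ j, x j := Finset.single_le_sum (fun j _ => hnn j) (Finset.mem_univ i)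
    _ ≤ R := hsum
  rw [EuclideanSpace.norm_eq]
  have h1 : ∑ i, ‖x i‖ ^ 2 ≤ R ^ 2 := by
    calc ∑ i, ‖x i‖ ^ 2 ≤ ∑ i, R * x i := by
          apply Finset.sum_le_sum
          intro i _
          rw [Real.norm_eq_abs, sq_abs]
          nlinarith [hnn i, hcoord i]
    _ = R * ∑ i, x i := by rw [Finset.mul_sum]
    _ ≤ R * R := mul_le_mul_of_nonneg_left hsum hR
    _ = R ^ 2 := (sq R).symm
  calc Real.sqrt (∑ i, ‖x i‖ ^ 2) ≤ Real.sqrt (R ^ 2) := Real.sqrt_le_sqrt h1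
  _ = R := Real.sqrt_sq hR

lemma isCompact_Ball1 (d : ℕ) (R : ℝ) (hR : 0 ≤ R) : IsCompact (Ball1 d R) := by
  have hsub : Ball1 d R ⊆ Metric.closedBall 0 R := by
    intro x hx
    simpa [Metric.mem_closedBall, dist_eq_norm] using norm_le_of_mem_Ball1 hR hx
  have hclosed : IsClosed (Ball1 d R) := by
    have h1 : Ball1 d R = (⋂ i, {x : Euc d | 0 ≤ x i}) ∩ {x : Euc d | ∑ i, x i ≤ R} := by
      ext x
      simp only [Ball1, Od, Set.mem_setOf_eq, Set.mem_inter_iff, Set.mem_iInter]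
    rw [h1]
    refine IsClosed.inter (isClosed_iInter fun i => ?_) ?_
    · exact isClosed_le continuous_const (EuclideanSpace.proj i).continuous
    · exact isClosed_le (continuous_finset_sum _ fun i _ => (EuclideanSpace.proj i).continuous)
        continuous_const
  exact (isCompact_closedBall (0 : Euc d) R).of_isClosed_subset hclosed hsub

lemma prod_component_norm_le {d : ℕ} (z : WithLp 2 (Euc d × Euc d)) :
    ‖(WithLp.prodContinuousLinearEquiv 2 ℝ (Euc d) (Euc d) z).1‖ ≤ ‖z‖ ∧
      ‖(WithLp.prodContinuousLinearEquiv 2 ℝ (Euc d) (Euc d) z).2‖ ≤ ‖z‖ := by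
  have h := WithLp.prod_norm_sq_eq_of_L2 z
  simp only [WithLp.prodContinuousLinearEquiv_apply, WithLp.ofLp_fst, WithLp.ofLp_snd]
  constructor <;> nlinarith [norm_nonneg z, norm_nonneg z.fst, norm_nonneg z.snd]

set_option maxHeartbeats 1000000 in
lemma key_nonneg (d : ℕ) (hd : 1 ≤ d)
    (k : Fin d → Fin d → EReal) (hkpos : ∀ i j, 0 < k i j)
    (F G : Euc d → Euc d → Euc d)
    (hFc : Continuous fun q : Euc d × Euc d => F q.1 q.2)
    (r lam : ℝ) (hr : 0 < r) (hlam : 0 ≤ lam) (T : Euc d →L[ℝ] Euc d)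
    (R₀ : ℝ) (hR₀ : 0 < R₀)
    (hyp2T : ∀ R ≥ R₀, ∀ x ∈ Ball1 d R, T x ∈ Ball1 d R)
    (hyp3 : ∀ x ∈ Od d, ∀ y ∈ Od d, ∀ p q : Euc d,
      0 ≤ ⟪G x p - G y q, x - y⟫ + ⟪F x p - F y q, p - q⟫)
    (hvec : Fin d → ℝ) (hpot : ∀ i j, i ≠ j → k i j ≠ ⊤ → hvec j + 1 ≤ hvec i)
    (U W : Euc d → Euc d)
    (hU : IsMonotoneSolIC d k F G r lam T R₀ U)
    (hW : IsMonotoneSolIC d k F G r lam T R₀ W) :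
    ∀ a ∈ Od d, ∀ b ∈ Od d, 0 ≤ ⟪U a - W b, a - b⟫ := by
  obtain ⟨hUc, hUM, R₁U, hRU₀, hUsol⟩ := hU
  obtain ⟨hWc, hWM, R₁W, hRW₀, hWsol⟩ := hW
  intro a ha b hb
  set R : ℝ := max (max R₁U R₁W) (max (∑ i, a i) (∑ i, b i)) with hRdef
  have hRU : R₁U ≤ R := le_trans (le_max_left _ _) (le_max_left _ _)
  have hRW : R₁W ≤ R := le_trans (le_max_right _ _) (le_max_left _ _)
  have hR0R : R₀ ≤ R := le_trans hRU₀ hRU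
  have hRpos : 0 < R := lt_of_lt_of_le hR₀ hR0R
  set B : Set (Euc d) := Ball1 d R with hBdef
  have haB : a ∈ B := ⟨ha, le_trans (le_max_left _ _) (le_max_right _ _)⟩
  have hbB : b ∈ B := ⟨hb, le_trans (le_max_right _ _) (le_max_right _ _)⟩
  have hBOd : B ⊆ Od d := fun x hx => hx.1
  have hBcomp : IsCompact B := isCompact_Ball1 d R hRpos.le
  have hBnorm : ∀ x ∈ B, ‖x‖ ≤ R := fun x hx => norm_le_of_mem_Ball1 hRpos.le hx
  -- the product space
  haveI hfin2 : FiniteDimensional ℝ (WithLp 2 (Euc d × Euc d)) :=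
    (WithLp.linearEquiv 2 ℝ (Euc d × Euc d)).symm.finiteDimensional
  set eh : WithLp 2 (Euc d × Euc d) ≃L[ℝ] Euc d × Euc d :=
    WithLp.prodContinuousLinearEquiv 2 ℝ (Euc d) (Euc d) with hehdef
  set K2 : Set (WithLp 2 (Euc d × Euc d)) := eh ⁻¹' (B ×ˢ B) with hK2def
  have hK2comp : IsCompact K2 := eh.toHomeomorph.isCompact_preimage.mpr (hBcomp.prod hBcomp)
  set Φ : WithLp 2 (Euc d × Euc d) → ℝ :=
    fun p => ⟪U (eh p).1 - W (eh p).2, (eh p).1 - (eh p).2⟫ with hΦdef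
  have hΦc : ContinuousOn Φ K2 := by
    have h1 : ContinuousOn (fun p : WithLp 2 (Euc d × Euc d) => U (eh p).1) K2 :=
      hUc.comp ((continuous_fst.comp eh.continuous).continuousOn)
        (fun p hp => hBOd hp.1)
    have h2 : ContinuousOn (fun p : WithLp 2 (Euc d × Euc d) => W (eh p).2) K2 :=
      hWc.comp ((continuous_snd.comp eh.continuous).continuousOn)
        (fun p hp => hBOd hp.2)
    have h3 : Continuous (fun p : WithLp 2 (Euc d × Euc d) => (eh p).1 - (eh p).2) :=
      (continuous_fst.comp eh.continuous).sub (continuous_snd.comp eh.continuous)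
    exact (h1.sub h2).inner h3.continuousOn
  have habK2 : (eh.symm (a, b)) ∈ K2 := by
    simp only [hK2def, Set.mem_preimage, ContinuousLinearEquiv.apply_symm_apply]
    exact ⟨haB, hbB⟩
  have hK2ne : K2.Nonempty := ⟨eh.symm (a, b), habK2⟩
  obtain ⟨pm, hpmK, hpm⟩ := hK2comp.exists_isMinOn hK2ne hΦc
  set μ : ℝ := Φ pm with hμdef
  suffices hμ0 : 0 ≤ μ by
    have h1 := hpm habK2
    have h2 : Φ (eh.symm (a, b)) = ⟪U a - W b, a - b⟫ := by
      simp [hΦdef]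
    have h1' : μ ≤ Φ (eh.symm (a, b)) := h1
    rw [h2] at h1'
    exact le_trans hμ0 h1'
  -- bounds for F along U and W on B
  obtain ⟨M₁, hM₁⟩ := hBcomp.exists_bound_of_continuousOn
    (f := fun x => F x (U x))
    (hFc.comp_continuousOn (continuousOn_id.prodMk (hUc.mono hBOd)))
  obtain ⟨M₂, hM₂⟩ := hBcomp.exists_bound_of_continuousOn
    (f := fun x => F x (W x))
    (hFc.comp_continuousOn (continuousOn_id.prodMk (hWc.mono hBOd)))
  set M : ℝ := max M₁ M₂ with hMdef
  have hM0 : 0 ≤ M := le_trans (norm_nonneg _) (le_trans (hM₁ a haB) (le_max_left _ _))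
  -- the potential vector in Euc d
  set hE : Euc d := (WithLp.equiv 2 (Fin d → ℝ)).symm (fun i => hvec i) with hEdef
  have hEco : ∀ i, hE i = hvec i := fun i => rfl
  set H : ℝ := ‖hE‖ + 1 with hHdef
  have hHpos : 0 < H := by positivity
  set Ctot : ℝ := H * (4 * R * (r + lam) + 2 * M) + 1 with hCtotdef
  have hCtotpos : 0 < Ctot := by positivity
  have hrμ : 0 ≤ r * μ := by
    refine le_of_forall_pos_le_add (fun ε hε => ?_)
    set ε' : ℝ := ε / Ctot with hε'def
    have hε'pos : 0 < ε' := div_pos hε hCtotpos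
    -- Stegall perturbation
    obtain ⟨v, hvnear, p₀, hp₀K, hp₀⟩ := stegall_perturb hK2comp hK2ne hΦc
      (eh.symm (ε' • hE, ε' • hE)) (half_pos hε'pos)
    set w₁ : Euc d := (eh v).1 with hw₁def
    set w₂ : Euc d := (eh v).2 with hw₂def
    set x₀ : Euc d := (eh p₀).1 with hx₀def
    set y₀ : Euc d := (eh p₀).2 with hy₀def
    have hx₀B : x₀ ∈ B := hp₀K.1
    have hy₀B : y₀ ∈ B := hp₀K.2
    -- component estimates for the perturbation
    have hwnear : ‖w₁ - ε' • hE‖ < ε' / 2 ∧ ‖w₂ - ε' • hE‖ < ε' / 2 := by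
      have hfsteq : (eh (v - eh.symm (ε' • hE, ε' • hE))).1 = w₁ - ε' • hE := by
        rw [map_sub, ContinuousLinearEquiv.apply_symm_apply, Prod.fst_sub]
      have hsndeq : (eh (v - eh.symm (ε' • hE, ε' • hE))).2 = w₂ - ε' • hE := by
        rw [map_sub, ContinuousLinearEquiv.apply_symm_apply, Prod.snd_sub]
      have hcomp := prod_component_norm_le (v - eh.symm (ε' • hE, ε' • hE))
      rw [show WithLp.prodContinuousLinearEquiv 2 ℝ (Euc d) (Euc d)
            = (eh : WithLp 2 (Euc d × Euc d) ≃L[ℝ] Euc d × Euc d) from rfl] at hcomp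
      rw [hfsteq, hsndeq] at hcomp
      exact ⟨lt_of_le_of_lt hcomp.1 hvnear, lt_of_le_of_lt hcomp.2 hvnear⟩
    have hsmulnorm : ‖ε' • hE‖ = ε' * ‖hE‖ := by
      rw [norm_smul, Real.norm_eq_abs, abs_of_pos hε'pos]
    have hwnorm : ∀ w : Euc d, ‖w - ε' • hE‖ < ε' / 2 → ‖w‖ ≤ ε' * H := by
      intro w hw
      have h1 := norm_add_le (w - ε' • hE) (ε' • hE)
      rw [sub_add_cancel] at h1
      have h2 : 0 < ε' * 1 := by nlinarith
      calc ‖w‖ ≤ ‖w - ε' • hE‖ + ‖ε' • hE‖ := h1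
      _ ≤ ε' / 2 + ε' * ‖hE‖ := by rw [hsmulnorm]; linarith [hw]
      _ ≤ ε' * H := by rw [hHdef]; nlinarith
    have hw₁norm : ‖w₁‖ ≤ ε' * H := hwnorm w₁ hwnear.1
    have hw₂norm : ‖w₂‖ ≤ ε' * H := hwnorm w₂ hwnear.2
    have horder : ∀ (w : Euc d), ‖w - ε' • hE‖ < ε' / 2 →
        ∀ i j, i ≠ j → k i j ≠ ⊤ → w j ≤ w i := by
      intro w hw i j hne htop
      have hco : ∀ m, |w m - ε' * hvec m| ≤ ‖w - ε' • hE‖ := by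
        intro m
        have h1 := abs_coord_le_norm (w - ε' • hE) m
        have h2 : (w - ε' • hE) m = w m - ε' * hvec m := by
          simp [PiLp.sub_apply, PiLp.smul_apply, smul_eq_mul, hEco]
        rwa [h2] at h1
      have hi := abs_le.mp (le_of_lt (lt_of_le_of_lt (hco i) hw))
      have hj := abs_le.mp (le_of_lt (lt_of_le_of_lt (hco j) hw))
      have hp := hpot i j hne htop
      nlinarith [hi.1, hi.2, hj.1, hj.2, hε'pos]
    -- admissible test vectors
    have hjump : ∀ p : Euc d, leJump d k p p → ∀ w : Euc d,
        (∀ i j, i ≠ j → k i j ≠ ⊤ → w j ≤ w i) → leJump d k (p - w) (p - w) := by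
      intro p hp w hw i j
      rcases eq_or_ne i j with rfl | hne
      · have h0 : (0 : EReal) + (((p - w) i : ℝ) : EReal) ≤ k i i + (((p - w) i : ℝ) : EReal) :=
          add_le_add_left (hkpos i i).le _
        simpa using h0
      · rcases eq_or_ne (k i j) ⊤ with htop | htop
        · rw [htop]
          rw [EReal.top_add_coe]
          exact le_top
        · have hbot : k i j ≠ ⊥ := ne_bot_of_gt (hkpos i j)
          have hc : ((k i j).toReal : EReal) = k i j := EReal.coe_toReal htop hbot
          have h1 := hp i j
          rw [← hc, ← EReal.coe_add, EReal.coe_le_coe_iff] at h1 ⊢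
          have h2 : (p - w) i = p i - w i := by simp [PiLp.sub_apply]
          have h3 : (p - w) j = p j - w j := by simp [PiLp.sub_apply]
          rw [h2, h3]
          have h4 := hw i j hne htop
          linarith
    have hV₁ : leJump d k (W y₀ - w₁) (W y₀ - w₁) :=
      hjump (W y₀) (hWM y₀ (hBOd hy₀B)) w₁ (fun i j hne ht => horder w₁ hwnear.1 i j hne ht)
    have hV₂ : leJump d k (U x₀ - w₂) (U x₀ - w₂) :=
      hjump (U x₀) (hUM x₀ (hBOd hx₀B)) w₂ (fun i j hne ht => horder w₂ hwnear.2 i j hne ht)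
    -- basic identities on the product space
    have hΦsymm : ∀ (x y : Euc d), Φ (eh.symm (x, y)) = ⟪U x - W y, x - y⟫ := by
      intro x y; simp [hΦdef]
    have hΦp₀ : Φ p₀ = ⟪U x₀ - W y₀, x₀ - y₀⟫ := rfl
    have hinner : ∀ p : WithLp 2 (Euc d × Euc d),
        ⟪v, p⟫ = ⟪w₁, (eh p).1⟫ + ⟪w₂, (eh p).2⟫ := by
      intro p
      rw [WithLp.prod_inner_apply]
      rfl
    have hinnersymm : ∀ (x y : Euc d), ⟪v, eh.symm (x, y)⟫ = ⟪w₁, x⟫ + ⟪w₂, y⟫ := by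
      intro x y
      rw [hinner, ContinuousLinearEquiv.apply_symm_apply]
    have hmemsymm : ∀ (x y : Euc d), x ∈ B → y ∈ B → eh.symm (x, y) ∈ K2 := by
      intro x y hx hy
      simp only [hK2def, Set.mem_preimage, ContinuousLinearEquiv.apply_symm_apply]
      exact ⟨hx, hy⟩
    -- strict minimality in each variable
    have hstrictU : ∀ x ∈ Ball1 d R, x ≠ x₀ →
        ⟪U x₀ - (W y₀ - w₁), x₀ - y₀⟫ < ⟪U x - (W y₀ - w₁), x - y₀⟫ := by
      intro x hxB hxne
      have hmem : eh.symm (x, y₀) ∈ K2 := hmemsymm x y₀ hxB hy₀B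
      have hne' : eh.symm (x, y₀) ≠ p₀ := by
        intro hcon
        apply hxne
        have h5 := congrArg (fun z => (eh z).1) hcon
        simpa [ContinuousLinearEquiv.apply_symm_apply] using h5
      have hlt := hp₀ _ hmem hne'
      rw [hΦsymm, hinnersymm, hinner p₀] at hlt
      have e1 : ∀ xx : Euc d, ⟪U xx - (W y₀ - w₁), xx - y₀⟫
          = ⟪U xx - W y₀, xx - y₀⟫ + ⟪w₁, xx⟫ - ⟪w₁, y₀⟫ := by
        intro xx
        simp only [inner_sub_left, inner_sub_right]
        ring
      rw [e1, e1]
      rw [hΦp₀] at hlt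
      linarith [hlt]
    have hstrictW : ∀ y ∈ Ball1 d R, y ≠ y₀ →
        ⟪W y₀ - (U x₀ - w₂), y₀ - x₀⟫ < ⟪W y - (U x₀ - w₂), y - x₀⟫ := by
      intro y hyB hyne
      have hmem : eh.symm (x₀, y) ∈ K2 := hmemsymm x₀ y hx₀B hyB
      have hne' : eh.symm (x₀, y) ≠ p₀ := by
        intro hcon
        apply hyne
        have h5 := congrArg (fun z => (eh z).2) hcon
        simpa [ContinuousLinearEquiv.apply_symm_apply] using h5
      have hlt := hp₀ _ hmem hne'
      rw [hΦsymm, hinnersymm, hinner p₀] at hlt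
      have e2 : ∀ yy : Euc d, ⟪W yy - (U x₀ - w₂), yy - x₀⟫
          = ⟪U x₀ - W yy, x₀ - yy⟫ + ⟪w₂, yy⟫ - ⟪w₂, x₀⟫ := by
        intro yy
        simp only [inner_sub_left, inner_sub_right]
        ring
      rw [e2, e2]
      rw [hΦp₀] at hlt
      linarith [hlt]
    have hUineq := hUsol R hRU (W y₀ - w₁) hV₁ y₀ (hBOd hy₀B) x₀ hx₀B hstrictU
    have hWineq := hWsol R hRW (U x₀ - w₂) hV₂ x₀ (hBOd hx₀B) y₀ hy₀B hstrictW
    -- inner products against v are small on K2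
    have hvz : ∀ p ∈ K2, |⟪v, p⟫| ≤ 2 * R * (ε' * H) := by
      intro p hp
      rw [hinner p]
      have b1 : |⟪w₁, (eh p).1⟫| ≤ ε' * H * R := by
        calc |⟪w₁, (eh p).1⟫| ≤ ‖w₁‖ * ‖(eh p).1‖ := abs_real_inner_le_norm _ _
        _ ≤ (ε' * H) * R :=
            mul_le_mul hw₁norm (hBnorm _ hp.1) (norm_nonneg _) (by positivity)
      have b2 : |⟪w₂, (eh p).2⟫| ≤ ε' * H * R := by
        calc |⟪w₂, (eh p).2⟫| ≤ ‖w₂‖ * ‖(eh p).2‖ := abs_real_inner_le_norm _ _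
        _ ≤ (ε' * H) * R :=
            mul_le_mul hw₂norm (hBnorm _ hp.2) (norm_nonneg _) (by positivity)
      calc |⟪w₁, (eh p).1⟫ + ⟪w₂, (eh p).2⟫| ≤ |⟪w₁, (eh p).1⟫| + |⟪w₂, (eh p).2⟫| :=
        abs_add_le _ _
      _ ≤ 2 * R * (ε' * H) := by linarith
    -- near-minimality of Φ at p₀
    have hΦ₀le : ⟪U x₀ - W y₀, x₀ - y₀⟫ ≤ μ + 4 * R * (ε' * H) := by
      have hminle : Φ p₀ + ⟪v, p₀⟫ ≤ μ + ⟪v, pm⟫ := by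
        rcases eq_or_ne pm p₀ with he | hne
        · rw [hμdef, he]
        · exact le_of_lt (hp₀ pm hpmK hne)
      have a1 := abs_le.mp (hvz p₀ hp₀K)
      have a2 := abs_le.mp (hvz pm hpmK)
      rw [hΦp₀] at hminle
      linarith [hminle, a1.1, a1.2, a2.1, a2.2]
    -- the T-image bound
    have hΦT : μ ≤ ⟪U (T x₀) - W (T y₀), T x₀ - T y₀⟫ := by
      have hTmem : eh.symm (T x₀, T y₀) ∈ K2 :=
        hmemsymm _ _ (hyp2T R hR0R x₀ hx₀B) (hyp2T R hR0R y₀ hy₀B)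
      have h7 : μ ≤ Φ (eh.symm (T x₀, T y₀)) := hpm hTmem
      rwa [hΦsymm] at h7
    -- expansions for the final arithmetic
    have eA : ⟪F x₀ (U x₀), U x₀ - (W y₀ - w₁)⟫
        = ⟪F x₀ (U x₀), U x₀ - W y₀⟫ + ⟪F x₀ (U x₀), w₁⟫ := by
      simp only [inner_sub_right]; ring
    have eB : ⟪F y₀ (W y₀), W y₀ - (U x₀ - w₂)⟫
        = ⟪F y₀ (W y₀), W y₀ - U x₀⟫ + ⟪F y₀ (W y₀), w₂⟫ := by
      simp only [inner_sub_right]; ring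
    have mCU : lam * ⟪U x₀ - ContinuousLinearMap.adjoint T (U (T x₀)), x₀ - y₀⟫
        = lam * ⟪U x₀, x₀ - y₀⟫ - lam * ⟪U (T x₀), T x₀ - T y₀⟫ := by
      rw [inner_sub_left, ContinuousLinearMap.adjoint_inner_left, ← map_sub, mul_sub]
    have mCW : lam * ⟪W y₀ - ContinuousLinearMap.adjoint T (W (T y₀)), y₀ - x₀⟫
        = lam * ⟪W y₀, y₀ - x₀⟫ - lam * ⟪W (T y₀), T y₀ - T x₀⟫ := by
      rw [inner_sub_left, ContinuousLinearMap.adjoint_inner_left, ← map_sub, mul_sub]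
    have e5 : ⟪U x₀, x₀ - y₀⟫ + ⟪W y₀, y₀ - x₀⟫ = ⟪U x₀ - W y₀, x₀ - y₀⟫ := by
      simp only [inner_sub_left, inner_sub_right]; ring
    have e6 : ⟪U (T x₀), T x₀ - T y₀⟫ + ⟪W (T y₀), T y₀ - T x₀⟫
        = ⟪U (T x₀) - W (T y₀), T x₀ - T y₀⟫ := by
      simp only [inner_sub_left, inner_sub_right]; ring
    have mr : r * ⟪U x₀, x₀ - y₀⟫ + r * ⟪W y₀, y₀ - x₀⟫
        = r * ⟪U x₀ - W y₀, x₀ - y₀⟫ := by rw [← mul_add, e5]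
    have mlam : lam * ⟪U x₀, x₀ - y₀⟫ + lam * ⟪W y₀, y₀ - x₀⟫
        = lam * ⟪U x₀ - W y₀, x₀ - y₀⟫ := by rw [← mul_add, e5]
    have mtam : lam * ⟪U (T x₀), T x₀ - T y₀⟫ + lam * ⟪W (T y₀), T y₀ - T x₀⟫
        = lam * ⟪U (T x₀) - W (T y₀), T x₀ - T y₀⟫ := by rw [← mul_add, e6]
    have e7 := hyp3 x₀ (hBOd hx₀B) y₀ (hBOd hy₀B) (U x₀) (W y₀)
    have e8 : ⟪G x₀ (U x₀) - G y₀ (W y₀), x₀ - y₀⟫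
        = ⟪G x₀ (U x₀), x₀ - y₀⟫ + ⟪G y₀ (W y₀), y₀ - x₀⟫ := by
      simp only [inner_sub_left, inner_sub_right]; ring
    have e9 : ⟪F x₀ (U x₀) - F y₀ (W y₀), U x₀ - W y₀⟫
        = ⟪F x₀ (U x₀), U x₀ - W y₀⟫ + ⟪F y₀ (W y₀), W y₀ - U x₀⟫ := by
      simp only [inner_sub_left, inner_sub_right]; ring
    have e10 : |⟪F x₀ (U x₀), w₁⟫| ≤ M * (ε' * H) := by
      calc |⟪F x₀ (U x₀), w₁⟫| ≤ ‖F x₀ (U x₀)‖ * ‖w₁‖ := abs_real_inner_le_norm _ _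
      _ ≤ M * (ε' * H) :=
          mul_le_mul (le_trans (hM₁ x₀ hx₀B) (le_max_left _ _)) hw₁norm (norm_nonneg _) hM0
    have e11 : |⟪F y₀ (W y₀), w₂⟫| ≤ M * (ε' * H) := by
      calc |⟪F y₀ (W y₀), w₂⟫| ≤ ‖F y₀ (W y₀)‖ * ‖w₂‖ := abs_real_inner_le_norm _ _
      _ ≤ M * (ε' * H) :=
          mul_le_mul (le_trans (hM₂ y₀ hy₀B) (le_max_right _ _)) hw₂norm (norm_nonneg _) hM0
    have e10' := neg_le_of_abs_le e10
    have e11' := neg_le_of_abs_le e11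
    have m1 : r * ⟪U x₀ - W y₀, x₀ - y₀⟫ ≤ r * (μ + 4 * R * (ε' * H)) :=
      mul_le_mul_of_nonneg_left hΦ₀le hr.le
    have m2 : lam * ⟪U x₀ - W y₀, x₀ - y₀⟫ - lam * ⟪U (T x₀) - W (T y₀), T x₀ - T y₀⟫
        ≤ lam * (4 * R * (ε' * H)) := by
      have h8 : ⟪U x₀ - W y₀, x₀ - y₀⟫ - ⟪U (T x₀) - W (T y₀), T x₀ - T y₀⟫
          ≤ 4 * R * (ε' * H) := by linarith [hΦ₀le, hΦT]
      have h9 := mul_le_mul_of_nonneg_left h8 hlam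
      rw [mul_sub] at h9
      exact h9
    have m4 : ε' * (H * (4 * R * (r + lam) + 2 * M) + 1) = ε := by
      rw [hε'def, ← hCtotdef]
      exact div_mul_cancel₀ ε hCtotpos.ne'
    linarith [hUineq, hWineq, eA, eB, mCU, mCW, mr, mlam, mtam, e7, e8, e9, e10', e11',
      m1, m2, m4, hε'pos.le]
  nlinarith [hrμ, hr]

lemma coord_ineq (d : ℕ) (hd : 1 ≤ d) (U V : Euc d → Euc d)
    (hVc : ContinuousOn V (Od d)) {x : Euc d} (hx : x ∈ Od d)
    (hkey : ∀ y ∈ Od d, 0 ≤ ⟪U x - V y, x - y⟫) :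
    (∀ i, x i ≠ 0 → U x i = V x i) ∧ (∀ i, x i = 0 → U x i ≤ V x i) := by
  classical
  haveI : Nonempty (Fin d) := ⟨⟨0, hd⟩⟩
  set D : Euc d := U x - V x with hDdef
  set z : Euc d := (WithLp.equiv 2 (Fin d → ℝ)).symm
    (fun i => if x i = 0 then max (D i) 0 else D i) with hzdef
  have hzco : ∀ i, z i = if x i = 0 then max (D i) 0 else D i := fun i => rfl
  set t₀ : ℝ := Finset.univ.inf' Finset.univ_nonempty
    (fun i => if x i = 0 then 1 else x i / (|z i| + 1)) with ht₀def
  have ht₀pos : 0 < t₀ := by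
    rw [ht₀def, Finset.lt_inf'_iff]
    intro i _
    by_cases hxi : x i = 0
    · simp [hxi]
    · have h1 : 0 < x i := lt_of_le_of_ne (hx i) (Ne.symm hxi)
      have h2 : 0 < |z i| + 1 := by positivity
      simp only [hxi, if_false]
      positivity
  have hmemOd : ∀ t ∈ Set.Ioc (0:ℝ) t₀, x + t • z ∈ Od d := by
    intro t ht i
    have hco : (x + t • z) i = x i + t * z i := by
      simp [PiLp.add_apply, PiLp.smul_apply, smul_eq_mul]
    rw [hco]
    by_cases hxi : x i = 0
    · have hz0 : 0 ≤ z i := by rw [hzco, if_pos hxi]; exact le_max_right _ _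
      nlinarith [ht.1, hz0, hx i]
    · have h1 : t ≤ x i / (|z i| + 1) := by
        have := Finset.inf'_le (b := i)
          (f := fun i => if x i = 0 then 1 else x i / (|z i| + 1)) (Finset.mem_univ i)
        rw [if_neg hxi] at this
        exact le_trans ht.2 this
      have h2 : 0 < |z i| + 1 := by positivity
      have h3 : t * (|z i| + 1) ≤ x i := by
        rw [div_eq_mul_inv] at h1
        calc t * (|z i| + 1) ≤ (x i * (|z i| + 1)⁻¹) * (|z i| + 1) := by nlinarith
        _ = x i := by field_simp
      have h4 : -(t * |z i|) ≤ t * z i := by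
        have := neg_abs_le (z i)
        nlinarith [ht.1.le]
      nlinarith [ht.1.le]
  have hlimle : ⟪U x - V x, z⟫ ≤ 0 := by
    haveI hNB : (nhdsWithin (0:ℝ) (Set.Ioc 0 t₀)).NeBot := by
      apply mem_closure_iff_nhdsWithin_neBot.mp
      rw [closure_Ioc (ne_of_lt ht₀pos)]
      exact ⟨le_refl 0, ht₀pos.le⟩
    have htend1 : Filter.Tendsto (fun t : ℝ => x + t • z)
        (nhdsWithin 0 (Set.Ioc 0 t₀)) (nhds x) := by
      have hc : Continuous (fun t : ℝ => x + t • z) :=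
        continuous_const.add (continuous_id.smul continuous_const)
      have h1 := (hc.tendsto 0).mono_left
        (nhdsWithin_le_nhds (s := Set.Ioc (0:ℝ) t₀))
      simpa using h1
    have htend2 : Filter.Tendsto (fun t : ℝ => x + t • z)
        (nhdsWithin 0 (Set.Ioc 0 t₀)) (nhdsWithin x (Od d)) := by
      apply tendsto_nhdsWithin_of_tendsto_nhds_of_eventually_within _ htend1
      exact eventually_mem_nhdsWithin.mono hmemOd
    have htendV : Filter.Tendsto (fun t : ℝ => ⟪U x - V (x + t • z), z⟫)
        (nhdsWithin 0 (Set.Ioc 0 t₀)) (nhds ⟪U x - V x, z⟫) := by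
      have hV := (hVc x hx).tendsto.comp htend2
      exact (tendsto_const_nhds.sub hV).inner tendsto_const_nhds
    apply le_of_tendsto htendV
    filter_upwards [eventually_mem_nhdsWithin] with t ht
    have hy := hmemOd t ht
    have hk := hkey _ hy
    have hxy : x - (x + t • z) = (-t) • z := by
      rw [neg_smul]
      abel
    rw [hxy, real_inner_smul_right] at hk
    nlinarith [ht.1]
  have hsum : ∑ i, D i * z i ≤ 0 := by
    have hexp : ⟪U x - V x, z⟫ = ∑ i, D i * z i := by
      rw [PiLp.inner_apply]
      apply Finset.sum_congr rfl
      intro i _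
      simp [hDdef, RCLike.inner_apply, starRingEnd_apply]
      ring
    rwa [hexp] at hlimle
  have hterm : ∀ i, 0 ≤ D i * z i := by
    intro i
    rw [hzco]
    by_cases hxi : x i = 0
    · rw [if_pos hxi]
      rcases le_or_gt (D i) 0 with hD | hD
      · rw [max_eq_right hD]; simp
      · rw [max_eq_left hD.le]; positivity
    · rw [if_neg hxi]; exact mul_self_nonneg _
  have hall0 : ∀ i, D i * z i = 0 := by
    have h1 : ∑ i, D i * z i = 0 :=
      le_antisymm hsum (Finset.sum_nonneg fun i _ => hterm i)
    intro i
    exact (Finset.sum_eq_zero_iff_of_nonneg (fun i _ => hterm i)).mp h1 i (Finset.mem_univ i)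
  have hDco : ∀ i, D i = U x i - V x i := by
    intro i; simp [hDdef, PiLp.sub_apply]
  constructor
  · intro i hxi
    have h1 := hall0 i
    rw [hzco, if_neg hxi] at h1
    have h2 : D i = 0 := by nlinarith [h1]
    have := hDco i
    rw [h2] at this
    linarith [this.symm]
  · intro i hxi
    by_contra hcon
    push_neg at hcon
    have hD : 0 < D i := by rw [hDco i]; linarith
    have h1 := hall0 i
    rw [hzco, if_pos hxi, max_eq_left hD.le] at h1
    nlinarith [h1, hD]

/-- Theorem 4.1: under Hypotheses 1-3 and 7, there is at most one monotone solution of the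
master equation of the MFG of impulse control, and it is a monotone map. -/
theorem uniqueness_and_monotonicity_monotone_impulse_control
    (d : ℕ) (hd : 1 ≤ d)
    (k : Fin d → Fin d → EReal) (hkpos : ∀ i j, 0 < k i j)
    (F G : Euc d → Euc d → Euc d)
    (hFc : Continuous fun q : Euc d × Euc d => F q.1 q.2)
    (hGc : Continuous fun q : Euc d × Euc d => G q.1 q.2)
    (r lam : ℝ) (hr : 0 < r) (hlam : 0 ≤ lam) (T : Euc d →L[ℝ] Euc d)
    -- Hypothesis 1
    (hyp1F : ∀ x ∈ Od d, ∀ p : Euc d, ∀ i, x i = 0 → F x p i ≤ 0)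
    (hyp1T : ∀ x ∈ Od d, T x ∈ Od d)
    -- Hypothesis 2
    (R₀ : ℝ) (hR₀ : 0 < R₀)
    (hyp2F : ∀ x ∈ Od d, ∀ p : Euc d, R₀ ≤ ∑ i, x i → 0 ≤ ∑ i, F x p i)
    (hyp2T : ∀ R ≥ R₀, ∀ x ∈ Ball1 d R, T x ∈ Ball1 d R)
    -- Hypothesis 3
    (hyp3 : ∀ x ∈ Od d, ∀ y ∈ Od d, ∀ p q : Euc d,
      0 ≤ ⟪G x p - G y q, x - y⟫ + ⟪F x p - F y q, p - q⟫)
    -- Hypothesis 7: no nonconstant cycle of jumps with finite costs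
    (hyp7 : ∀ (n : ℕ) (s : ℕ → Fin d), s (n + 1) = s 0 →
      (∀ m ≤ n, k (s m) (s (m + 1)) ≠ ⊤) → ∀ m ≤ n + 1, s m = s 0) :
    (∀ U V : Euc d → Euc d, IsMonotoneSolIC d k F G r lam T R₀ U →
        IsMonotoneSolIC d k F G r lam T R₀ V → ∀ x ∈ Od d, U x = V x) ∧
    (∀ U : Euc d → Euc d, IsMonotoneSolIC d k F G r lam T R₀ U →
        ∀ x ∈ Od d, ∀ y ∈ Od d, 0 ≤ ⟪U x - U y, x - y⟫) := by
  obtain ⟨hv, hpot⟩ := exists_potential d k hyp7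
  have key : ∀ U W : Euc d → Euc d, IsMonotoneSolIC d k F G r lam T R₀ U →
      IsMonotoneSolIC d k F G r lam T R₀ W →
      ∀ a ∈ Od d, ∀ b ∈ Od d, 0 ≤ ⟪U a - W b, a - b⟫ :=
    fun U W hU hW => key_nonneg d hd k hkpos F G hFc r lam hr hlam T R₀ hR₀
      hyp2T hyp3 hv hpot U W hU hW
  constructor
  · intro U V hU hV x hx
    have h1 := coord_ineq d hd U V hV.1 hx (fun y hy => key U V hU hV x hx y hy)
    have h2 := coord_ineq d hd V U hU.1 hx (fun y hy => key V U hV hU x hx y hy)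
    ext i
    rcases eq_or_ne (x i) 0 with hxi | hxi
    · exact le_antisymm (h1.2 i hxi) (h2.2 i hxi)
    · exact h1.1 i hxi
  · intro U hU x hx y hy
    exact key U U hU hU x hx y hy
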